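/- arXiv:1310.5066 — 2 statements merged into one kernel-verified Lean document; each statement's English description precedes it below -/
import Mathlib

section
/- On the flat hyperbolic affine hypersphere x⁰ of dimension n₀ (Example 4.4), with affine metric g_{λμ} = ((λ+1)/λ)·c·δ_{λμ} where c = (C₀²/(n₀+1))^{1/(n₀+2)}, and Fubini–Pick components A_{λλλ} = −((λ²−1)/λ²)·c, A_{λλν} = ((λ+1)/(λν))·c for λ < ν, A_{λμν} = 0 otherwise (symmetric in all indices), the Pick invariant J = (1/(n₀(n₀−1)))·Σ g^{λ₁λ₂}g^{μ₁μ₂}g^{ν₁ν₂}A_{λ₁μ₁ν₁}A_{λ₂μ₂ν₂} equals (n₀+1)^{−(n₀+1)/(n₀+2)}·C₀^{−2/(n₀+2)}. -/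
/-- Auxiliary closed form for `c * (w l * w m * w v * A l m v ^ 2)`. -/
noncomputable def Gaux (l m v : ℕ) : ℝ :=
  if l = m ∧ m = v then ((l:ℝ)-1)^2/((l:ℝ)*((l:ℝ)+1))
  else if l = m ∧ l < v then 1/((v:ℝ)*((v:ℝ)+1))
  else if l = v ∧ l < m then 1/((m:ℝ)*((m:ℝ)+1))
  else if m = v ∧ m < l then 1/((l:ℝ)*((l:ℝ)+1))
  else 0

lemma Gaux_diag (l : ℕ) : Gaux l l l = ((l:ℝ)-1)^2/((l:ℝ)*((l:ℝ)+1)) := by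
  unfold Gaux; rw [if_pos ⟨rfl, rfl⟩]

lemma Gaux_llv {l v : ℕ} (h : l < v) : Gaux l l v = 1/((v:ℝ)*((v:ℝ)+1)) := by
  unfold Gaux; rw [if_neg (by omega), if_pos ⟨rfl, h⟩]

lemma Gaux_lml {l m : ℕ} (h : l < m) : Gaux l m l = 1/((m:ℝ)*((m:ℝ)+1)) := by
  unfold Gaux; rw [if_neg (by omega), if_neg (by omega), if_pos ⟨rfl, h⟩]

lemma Gaux_lmm {l m : ℕ} (h : m < l) : Gaux l m m = 1/((l:ℝ)*((l:ℝ)+1)) := by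
  unfold Gaux
  rw [if_neg (by omega), if_neg (by omega), if_neg (by omega), if_pos ⟨rfl, h⟩]

lemma Gaux_zero {l m v : ℕ} (h1 : ¬(l = m ∧ m = v)) (h2 : ¬(l = m ∧ l < v))
    (h3 : ¬(l = v ∧ l < m)) (h4 : ¬(m = v ∧ m < l)) : Gaux l m v = 0 := by
  unfold Gaux; rw [if_neg h1, if_neg h2, if_neg h3, if_neg h4]

lemma collapse_pair (s : Finset ℕ) (w : ℕ → ℝ) (g : ℕ → ℕ → ℝ)
    (hg : ∀ a b, g a b = if a = b then w a else 0) (f : ℕ → ℕ → ℝ) :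
    ∑ a ∈ s, ∑ b ∈ s, g a b * f a b = ∑ a ∈ s, w a * f a a := by
  refine Finset.sum_congr rfl fun a ha => ?_
  calc ∑ b ∈ s, g a b * f a b = ∑ b ∈ s, if a = b then w a * f a b else 0 := by
        refine Finset.sum_congr rfl fun b _ => ?_
        rw [hg]; split_ifs <;> simp
    _ = w a * f a a := by rw [Finset.sum_ite_eq]; simp [ha]

lemma Gaux_sum (n : ℕ) :
    ∑ l ∈ Finset.Icc 1 n, ∑ m ∈ Finset.Icc 1 n, ∑ v ∈ Finset.Icc 1 n, Gaux l m v
      = (n:ℝ) * ((n:ℝ) - 1) / ((n:ℝ) + 1) := by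
  induction n with
  | zero => simp
  | succ n ih =>
    set s := Finset.Icc 1 n with hs
    have hins : Finset.Icc 1 (n+1) = insert (n+1) s := by
      ext x; simp [hs, Finset.mem_Icc, Finset.mem_insert]; omega
    have hnot : (n+1) ∉ s := by simp [hs]
    have hcard : (s.card : ℝ) = n := by simp [hs, Nat.card_Icc]
    set N := n + 1 with hN
    have hmem : ∀ x ∈ s, 1 ≤ x ∧ x < N := by
      intro x hx; rw [hs, Finset.mem_Icc] at hx; omega
    set k : ℝ := 1/((N:ℝ)*((N:ℝ)+1)) with hk
    -- boundary evaluations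
    have e1 : ∑ v ∈ s, Gaux N N v = 0 := by
      refine Finset.sum_eq_zero fun v hv => ?_
      have := hmem v hv
      exact Gaux_zero (by omega) (by omega) (by omega) (by omega)
    have e2 : ∀ m ∈ s, Gaux N m N = 0 := by
      intro m hm; have := hmem m hm
      exact Gaux_zero (by omega) (by omega) (by omega) (by omega)
    have e3 : ∀ m ∈ s, ∑ v ∈ s, Gaux N m v = k := by
      intro m hm; have hm' := hmem m hm
      have : ∀ v ∈ s, Gaux N m v = if m = v then k else 0 := by
        intro v hv; have hv' := hmem v hv
        rcases eq_or_ne m v with rfl | h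
        · rw [if_pos rfl, Gaux_lmm hm'.2]
        · rw [if_neg h, Gaux_zero (by omega) (by omega) (by omega) (by omega)]
      rw [Finset.sum_congr rfl this, Finset.sum_ite_eq, if_pos hm]
    have e4 : ∀ l ∈ s, Gaux l N N = 0 := by
      intro l hl; have := hmem l hl
      exact Gaux_zero (by omega) (by omega) (by omega) (by omega)
    have e5 : ∀ l ∈ s, ∑ v ∈ s, Gaux l N v = k := by
      intro l hl; have hl' := hmem l hl
      have : ∀ v ∈ s, Gaux l N v = if l = v then k else 0 := by
        intro v hv; have hv' := hmem v hv
        rcases eq_or_ne l v with rfl | h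
        · rw [if_pos rfl, Gaux_lml hl'.2]
        · rw [if_neg h, Gaux_zero (by omega) (by omega) (by omega) (by omega)]
      rw [Finset.sum_congr rfl this, Finset.sum_ite_eq, if_pos hl]
    have e6 : ∀ l ∈ s, ∀ m ∈ s, Gaux l m N = if l = m then k else 0 := by
      intro l hl m hm; have hl' := hmem l hl; have hm' := hmem m hm
      rcases eq_or_ne l m with rfl | h
      · rw [if_pos rfl, Gaux_llv hl'.2]
      · rw [if_neg h, Gaux_zero (by omega) (by omega) (by omega) (by omega)]
    have e7 : ∀ l ∈ s, ∑ m ∈ s, Gaux l m N = if l ∈ s then k else 0 := by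
      intro l hl
      rw [Finset.sum_congr rfl (e6 l hl), Finset.sum_ite_eq]
    rw [hins, Finset.sum_insert hnot]
    have hA : (∑ m ∈ insert N s, ∑ v ∈ insert N s, Gaux N m v)
        = Gaux N N N + (n:ℝ) * k := by
      rw [Finset.sum_insert hnot, Finset.sum_insert hnot, e1]
      have h' : ∑ m ∈ s, ∑ v ∈ insert N s, Gaux N m v = ∑ m ∈ s, k := by
        refine Finset.sum_congr rfl fun m hm => ?_
        rw [Finset.sum_insert hnot, e2 m hm, e3 m hm, zero_add]
      rw [h', Finset.sum_const, nsmul_eq_mul, hcard]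
      ring
    have hB : ∑ l ∈ s, (∑ m ∈ insert N s, ∑ v ∈ insert N s, Gaux l m v)
        = 2 * (n:ℝ) * k
          + ∑ l ∈ s, ∑ m ∈ s, ∑ v ∈ s, Gaux l m v := by
      have : ∀ l ∈ s, (∑ m ∈ insert N s, ∑ v ∈ insert N s, Gaux l m v)
          = 2 * k + ∑ m ∈ s, ∑ v ∈ s, Gaux l m v := by
        intro l hl
        rw [Finset.sum_insert hnot, Finset.sum_insert hnot, e4 l hl, e5 l hl]
        have h'' : ∑ m ∈ s, ∑ v ∈ insert N s, Gaux l m v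
            = (∑ m ∈ s, Gaux l m N) + ∑ m ∈ s, ∑ v ∈ s, Gaux l m v := by
          rw [← Finset.sum_add_distrib]
          exact Finset.sum_congr rfl fun m hm => Finset.sum_insert hnot
        rw [h'', e7 l hl, if_pos hl]; ring
      rw [Finset.sum_congr rfl this, Finset.sum_add_distrib, Finset.sum_const,
        nsmul_eq_mul, hcard]
      ring
    rw [hA, hB, ih, Gaux_diag]
    have hNpos : (0:ℝ) < (N:ℝ) := by positivity
    have hNn : (N:ℝ) = (n:ℝ) + 1 := by push_cast [hN]; ring
    push_cast [hN] at *
    rw [hk]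
    have h1 : ((n:ℝ)+1) ≠ 0 := by positivity
    have h2 : ((n:ℝ)+1+1) ≠ 0 := by positivity
    field_simp
    ring

/-- The Pick invariant of the flat hyperbolic affine hypersphere
`x¹⋯x^{n₀+1} = C₀` equals `(n₀+1)^{−(n₀+1)/(n₀+2)} C₀^{−2/(n₀+2)}`. -/
theorem stmt_13 (n₀ : ℕ) (hn : 2 ≤ n₀) (C₀ : ℝ) (hC₀ : 0 < C₀)
    (c : ℝ) (hc : c = (C₀ ^ 2 / ((n₀ : ℝ) + 1)) ^ ((1 : ℝ) / ((n₀ : ℝ) + 2)))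
    (A : ℕ → ℕ → ℕ → ℝ)
    (hsym1 : ∀ l m v, A l m v = A m l v) (hsym2 : ∀ l m v, A l m v = A l v m)
    (hdiag : ∀ l ∈ Finset.Icc 1 n₀, A l l l = -(((l : ℝ)^2 - 1) / (l : ℝ)^2) * c)
    (hoff : ∀ l ∈ Finset.Icc 1 n₀, ∀ v ∈ Finset.Icc 1 n₀, l < v →
      A l l v = ((l : ℝ) + 1) / ((l : ℝ) * (v : ℝ)) * c)
    (hzero1 : ∀ l m v, l ≠ m → m ≠ v → l ≠ v → A l m v = 0)
    (hzero2 : ∀ l v, l < v → A v v l = 0)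
    (gInv : ℕ → ℕ → ℝ)
    (hg : ∀ l m, gInv l m = if l = m then (l : ℝ) / (((l : ℝ) + 1) * c) else 0)
    (J : ℝ)
    (hJ : J = (1 / ((n₀ : ℝ) * ((n₀ : ℝ) - 1))) *
      ∑ l1 ∈ Finset.Icc 1 n₀, ∑ l2 ∈ Finset.Icc 1 n₀, ∑ m1 ∈ Finset.Icc 1 n₀,
        ∑ m2 ∈ Finset.Icc 1 n₀, ∑ v1 ∈ Finset.Icc 1 n₀, ∑ v2 ∈ Finset.Icc 1 n₀,
          gInv l1 l2 * gInv m1 m2 * gInv v1 v2 * A l1 m1 v1 * A l2 m2 v2) :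
    J = ((n₀ : ℝ) + 1) ^ (-(((n₀ : ℝ) + 1) / ((n₀ : ℝ) + 2)))
        * C₀ ^ (-(2 : ℝ) / ((n₀ : ℝ) + 2)) := by
  have hcpos : 0 < c := by rw [hc]; positivity
  have hcne : c ≠ 0 := hcpos.ne'
  set s := Finset.Icc 1 n₀ with hs
  set w : ℕ → ℝ := fun l => (l : ℝ) / (((l : ℝ) + 1) * c) with hw
  have hgw : ∀ a b, gInv a b = if a = b then w a else 0 := hg
  -- pointwise identity
  have key : ∀ l ∈ s, ∀ m ∈ s, ∀ v ∈ s,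
      w l * (w m * (w v * (A l m v * A l m v))) = Gaux l m v / c := by
    intro l hl m hm v hv
    have hl' := Finset.mem_Icc.mp hl
    have hm' := Finset.mem_Icc.mp hm
    have hv' := Finset.mem_Icc.mp hv
    have hlp : (0:ℝ) < l := by exact_mod_cast hl'.1
    have hmp : (0:ℝ) < m := by exact_mod_cast hm'.1
    have hvp : (0:ℝ) < v := by exact_mod_cast hv'.1
    rcases eq_or_ne l m with rfl | hlm
    · rcases lt_trichotomy l v with hlv | rfl | hvl
      · rw [hoff l hl v hv hlv, Gaux_llv hlv, hw]
        have hlvR : (l:ℝ) < v := by exact_mod_cast hlv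
        field_simp
      · rw [hdiag l hl, Gaux_diag, hw]
        field_simp
        ring
      · rw [hzero2 v l hvl, Gaux_zero (by omega) (by omega) (by omega) (by omega)]
        simp
    · rcases eq_or_ne l v with rfl | hlv
      · have hAs : A l m l = A l l m := by rw [hsym2]
        rcases lt_or_gt_of_ne hlm with h | h
        · rw [hAs, hoff l hl m hm h, Gaux_lml h, hw]
          field_simp
        · rw [hAs, hzero2 m l h, Gaux_zero (by omega) (by omega) (by omega) (by omega)]
          simp
      · rcases eq_or_ne m v with rfl | hmv
        · have hAs : A l m m = A m m l := by rw [hsym1 l m m, hsym2 m l m]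
          rcases lt_or_gt_of_ne hlm with h | h
          · rw [hAs, hzero2 l m h, Gaux_zero (by omega) (by omega) (by omega) (by omega)]
            simp
          · rw [hAs, hoff m hm l hl h, Gaux_lmm h, hw]
            field_simp
        · rw [hzero1 l m v hlm hmv hlv,
            Gaux_zero (by omega) (by omega) (by omega) (by omega)]
          simp
  -- collapse the sextuple sum
  have e1 : (∑ l1 ∈ s, ∑ l2 ∈ s, ∑ m1 ∈ s, ∑ m2 ∈ s, ∑ v1 ∈ s, ∑ v2 ∈ s,
        gInv l1 l2 * gInv m1 m2 * gInv v1 v2 * A l1 m1 v1 * A l2 m2 v2)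
      = ∑ l1 ∈ s, ∑ l2 ∈ s, gInv l1 l2 *
          (∑ m1 ∈ s, ∑ m2 ∈ s, gInv m1 m2 *
            (∑ v1 ∈ s, ∑ v2 ∈ s, gInv v1 v2 * (A l1 m1 v1 * A l2 m2 v2))) := by
    simp only [Finset.mul_sum]
    exact Finset.sum_congr rfl fun _ _ => Finset.sum_congr rfl fun _ _ =>
      Finset.sum_congr rfl fun _ _ => Finset.sum_congr rfl fun _ _ =>
      Finset.sum_congr rfl fun _ _ => Finset.sum_congr rfl fun _ _ => by ring
  have e2 : (∑ l1 ∈ s, ∑ l2 ∈ s, ∑ m1 ∈ s, ∑ m2 ∈ s, ∑ v1 ∈ s, ∑ v2 ∈ s,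
        gInv l1 l2 * gInv m1 m2 * gInv v1 v2 * A l1 m1 v1 * A l2 m2 v2)
      = ∑ l ∈ s, w l * ∑ m ∈ s, w m * ∑ v ∈ s, w v * (A l m v * A l m v) := by
    rw [e1, collapse_pair s w gInv hgw]
    refine Finset.sum_congr rfl fun l hl => ?_
    rw [collapse_pair s w gInv hgw]
    congr 1
    refine Finset.sum_congr rfl fun m hm => ?_
    rw [collapse_pair s w gInv hgw]
  have e3 : (∑ l ∈ s, w l * ∑ m ∈ s, w m * ∑ v ∈ s, w v * (A l m v * A l m v))
      = (∑ l ∈ s, ∑ m ∈ s, ∑ v ∈ s, Gaux l m v) / c := by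
    simp only [Finset.mul_sum, Finset.sum_div]
    refine Finset.sum_congr rfl fun l hl => Finset.sum_congr rfl fun m hm =>
      Finset.sum_congr rfl fun v hv => ?_
    exact key l hl m hm v hv
  have e4 : J = 1 / (((n₀:ℝ) + 1) * c) := by
    rw [hJ, e2, e3, Gaux_sum]
    have h1 : (2:ℝ) ≤ (n₀:ℝ) := by exact_mod_cast hn
    have h2 : (n₀:ℝ) ≠ 0 := by linarith
    have h3 : (n₀:ℝ) - 1 ≠ 0 := by linarith
    have h4 : (n₀:ℝ) + 1 ≠ 0 := by linarith
    field_simp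
  -- final rpow algebra
  set x : ℝ := (n₀:ℝ) + 1 with hx
  set e : ℝ := (n₀:ℝ) + 2 with he
  have hxpos : (0:ℝ) < x := by positivity
  have hepos : (0:ℝ) < e := by positivity
  have hcc : c = C₀ ^ ((2:ℝ)/e) * x ^ (-(1:ℝ)/e) := by
    have h2 : C₀ ^ ((2:ℝ)/e) = (C₀^2) ^ ((1:ℝ)/e) := by
      rw [← Real.rpow_natCast C₀ 2, ← Real.rpow_mul hC₀.le]
      congr 1
      push_cast
      ring
    have h3 : x ^ (-(1:ℝ)/e) = (x ^ ((1:ℝ)/e))⁻¹ := by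
      rw [show (-(1:ℝ))/e = -((1:ℝ)/e) by ring, Real.rpow_neg hxpos.le]
    rw [hc, Real.div_rpow (by positivity) hxpos.le, h2, h3]
    exact div_eq_mul_inv _ _
  have hxe : x ^ (x/e) = x * x ^ (-(1:ℝ)/e) := by
    have h1 : x/e = 1 + (-(1:ℝ)/e) := by
      rw [hx, he]; field_simp; ring
    rw [h1, Real.rpow_add hxpos, Real.rpow_one]
  have hCne : C₀ ^ ((2:ℝ)/e) ≠ 0 := by positivity
  have hxne : x ^ (-(1:ℝ)/e) ≠ 0 := by positivity
  rw [e4, hcc]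
  rw [show -(((n₀:ℝ)+1)/((n₀:ℝ)+2)) = -(x/e) by rw [hx, he],
    show (-(2:ℝ))/((n₀:ℝ)+2) = -((2:ℝ)/e) by rw [he]; ring,
    Real.rpow_neg hxpos.le, Real.rpow_neg hC₀.le, hxe]
  field_simp
end

section
/- Let C > 0, L₁ = −1/(f_K C), and for α = 1,...,s let H_α be the vector −(f_{α̃−1}/(f_{α̃}C))·∂/∂t^{α̃−1} + (1/C)·Σ_{β=α}^{s−1} ((n_{β+1}+1)/f_{β̃+1})·∂/∂t^{β̃}, measured in the diagonal metric g with g(∂/∂t^λ, ∂/∂t^μ) = (f_{λ+1}C/((n_{λ+1}+1)f_λ))·δ_{λμ}. Then g(H_α, H_α) = ((n−n_α)/(n_α+1))·(−L₁) and g(H_α, H_β) = L₁ for α ≠ β. -/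
private lemma stmt16_tele (g : ℕ → ℝ) (a b : ℕ) (hab : a ≤ b) :
    ∑ lam ∈ Finset.Ico a b, (g lam - g (lam + 1)) = g a - g b := by
  induction b, hab using Nat.le_induction with
  | base => simp
  | succ b hb ih =>
      rw [Finset.sum_Ico_succ_top (by omega), ih]; ring

/-- Proposition 4.7(6): inner products of the mean-curvature vectors `H_α` of the Calabi
composition of `r` points and `s` hyperbolic affine hyperspheres, computed in the diagonal
metric `g(∂_λ, ∂_μ) = (f_{λ+1}C/((n_{λ+1}+1)f_λ)) δ_{λμ}`:
`g(H_α, H_α) = ((n−n_α)/(n_α+1))(−L₁)` and `g(H_α, H_β) = L₁` for `α ≠ β`. -/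
theorem stmt_16 (r s : ℕ) (hs : 1 ≤ s) (hK : 2 ≤ r + s)
    (n : ℕ → ℕ) (hn0 : ∀ a, 1 ≤ a → a ≤ r → n a = 0)
    (f : ℕ → ℝ) (hf : ∀ b, f b = (b : ℝ) + ∑ i ∈ Finset.Icc 1 b, (n i : ℝ))
    (C : ℝ) (hC : 0 < C)
    (L₁ : ℝ) (hL₁ : L₁ = -1 / (f (r + s) * C))
    (gmet : (ℕ → ℝ) → (ℕ → ℝ) → ℝ)
    (hg : ∀ u v : ℕ → ℝ, gmet u v = ∑ lam ∈ Finset.Icc 1 (r + s - 1),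
      (f (lam + 1) * C / (((n (lam + 1) : ℝ) + 1) * f lam)) * u lam * v lam)
    (H : ℕ → ℕ → ℝ)
    (hH : ∀ α ∈ Finset.Icc 1 s, ∀ lam : ℕ, H α lam =
      (if lam = α + r - 1 then -(f (α + r - 1) / (f (α + r) * C)) else 0)
      + (if α + r ≤ lam ∧ lam ≤ r + s - 1 then
          (1 / C) * (((n (lam + 1) : ℝ) + 1) / f (lam + 1)) else 0)) :
    (∀ α ∈ Finset.Icc 1 s,
      gmet (H α) (H α)
        = ((f (r + s) - 1 - (n (α + r) : ℝ)) / ((n (α + r) : ℝ) + 1)) * (-L₁))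
    ∧ (∀ α ∈ Finset.Icc 1 s, ∀ β ∈ Finset.Icc 1 s, α ≠ β →
        gmet (H α) (H β) = L₁) := by
  have hfpos : ∀ b : ℕ, 1 ≤ b → 0 < f b := by
    intro b hb
    rw [hf]
    have h1 : (0:ℝ) ≤ ∑ i ∈ Finset.Icc 1 b, (n i : ℝ) :=
      Finset.sum_nonneg fun i _ => by positivity
    have h2 : (1:ℝ) ≤ (b:ℝ) := by exact_mod_cast hb
    linarith
  have hstep : ∀ b : ℕ, f (b + 1) = f b + 1 + (n (b + 1) : ℝ) := by
    intro b
    rw [hf, hf, Finset.sum_Icc_succ_top (by omega : 1 ≤ b + 1)]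
    push_cast; ring
  have hIcc : Finset.Icc 1 (r + s - 1) = Finset.Ico 1 (r + s) := by
    ext x; simp only [Finset.mem_Icc, Finset.mem_Ico]; omega
  have hKpos : 0 < f (r + s) := hfpos _ (by omega)
  -- tail term computation
  have htail : ∀ lam : ℕ, 1 ≤ lam →
      (f (lam + 1) * C / (((n (lam + 1) : ℝ) + 1) * f lam)) *
        ((1 / C) * (((n (lam + 1) : ℝ) + 1) / f (lam + 1))) *
        ((1 / C) * (((n (lam + 1) : ℝ) + 1) / f (lam + 1)))
      = 1 / (C * f lam) - 1 / (C * f (lam + 1)) := by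
    intro lam hlam
    have h1 : 0 < f lam := hfpos lam hlam
    have hm : (0:ℝ) < (n (lam + 1) : ℝ) + 1 := by positivity
    have h2' : f (lam + 1) = f lam + ((n (lam + 1) : ℝ) + 1) := by
      rw [hstep lam]; ring
    rw [h2']
    have h2 : (0:ℝ) < f lam + ((n (lam + 1) : ℝ) + 1) := by linarith
    field_simp
    ring
  -- diagonal terms
  have hdiag : ∀ α ∈ Finset.Icc 1 s,
      gmet (H α) (H α)
        = ((f (r + s) - 1 - (n (α + r) : ℝ)) / ((n (α + r) : ℝ) + 1)) * (-L₁) := by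
    intro α hα
    simp only [Finset.mem_Icc] at hα
    have ha1 : 1 ≤ α + r := by omega
    have haK : α + r ≤ r + s := by omega
    rw [hg, hIcc, ← Finset.sum_Ico_consecutive _ ha1 haK]
    have hfirst : (∑ lam ∈ Finset.Ico 1 (α + r),
        (f (lam + 1) * C / (((n (lam + 1) : ℝ) + 1) * f lam)) * H α lam * H α lam)
        = if α + r - 1 ∈ Finset.Ico 1 (α + r) then
            (f (α + r - 1 + 1) * C / (((n (α + r - 1 + 1) : ℝ) + 1) * f (α + r - 1))) *
              (f (α + r - 1) / (f (α + r) * C)) * (f (α + r - 1) / (f (α + r) * C))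
          else 0 := by
      rw [← Finset.sum_ite_eq' (Finset.Ico 1 (α + r)) (α + r - 1)
        (fun lam => (f (lam + 1) * C / (((n (lam + 1) : ℝ) + 1) * f lam)) *
          (f (α + r - 1) / (f (α + r) * C)) * (f (α + r - 1) / (f (α + r) * C)))]
      apply Finset.sum_congr rfl
      intro lam hlam
      simp only [Finset.mem_Ico] at hlam
      rw [hH α (by simp only [Finset.mem_Icc]; omega) lam,
        if_neg (by omega : ¬(α + r ≤ lam ∧ lam ≤ r + s - 1)), add_zero]
      by_cases h : lam = α + r - 1
      · rw [if_pos h, if_pos h]; ring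
      · rw [if_neg h, if_neg h]; ring
    have hsecond : (∑ lam ∈ Finset.Ico (α + r) (r + s),
        (f (lam + 1) * C / (((n (lam + 1) : ℝ) + 1) * f lam)) * H α lam * H α lam)
        = 1 / (C * f (α + r)) - 1 / (C * f (r + s)) := by
      rw [← stmt16_tele (fun x => 1 / (C * f x)) (α + r) (r + s) haK]
      apply Finset.sum_congr rfl
      intro lam hlam
      simp only [Finset.mem_Ico] at hlam
      rw [hH α (by simp only [Finset.mem_Icc]; omega) lam,
        if_neg (by omega : ¬ lam = α + r - 1),
        if_pos (by omega : α + r ≤ lam ∧ lam ≤ r + s - 1), zero_add]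
      exact htail lam (by omega)
    rw [hfirst, hsecond, hL₁]
    by_cases h2 : 2 ≤ α + r
    · rw [if_pos (by simp only [Finset.mem_Ico]; omega),
        show α + r - 1 + 1 = α + r from by omega]
      have hx : 0 < f (α + r - 1) := hfpos _ (by omega)
      have hy : f (α + r) = f (α + r - 1) + ((n (α + r) : ℝ) + 1) := by
        have := hstep (α + r - 1)
        rw [show α + r - 1 + 1 = α + r from by omega] at this
        rw [this]; ring
      rw [hy]
      have hy' : (0:ℝ) < f (α + r - 1) + ((n (α + r) : ℝ) + 1) := by positivity
      have hm : (0:ℝ) < (n (α + r) : ℝ) + 1 := by positivity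
      field_simp
      ring
    · rw [if_neg (by simp only [Finset.mem_Ico]; omega)]
      have har : α + r = 1 := by omega
      rw [har]
      have hf0 : f 0 = 0 := by rw [hf]; simp
      have hf1 : f 1 = 1 + (n 1 : ℝ) := by
        have := hstep 0; rw [hf0] at this; rw [this]; ring
      rw [hf1]
      have hm : (0:ℝ) < (n 1 : ℝ) + 1 := by positivity
      field_simp
      ring
  -- cross terms for α < β
  have hcross : ∀ α ∈ Finset.Icc 1 s, ∀ β ∈ Finset.Icc 1 s, α < β →
      gmet (H α) (H β) = L₁ := by
    intro α hα β hβ hab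
    simp only [Finset.mem_Icc] at hα hβ
    have hb1 : 1 ≤ β + r := by omega
    have hbK : β + r ≤ r + s := by omega
    rw [hg, hIcc, ← Finset.sum_Ico_consecutive _ hb1 hbK]
    have hfirst : (∑ lam ∈ Finset.Ico 1 (β + r),
        (f (lam + 1) * C / (((n (lam + 1) : ℝ) + 1) * f lam)) * H α lam * H β lam)
        = if β + r - 1 ∈ Finset.Ico 1 (β + r) then
            (f (β + r - 1 + 1) * C / (((n (β + r - 1 + 1) : ℝ) + 1) * f (β + r - 1))) *
              H α (β + r - 1) * (-(f (β + r - 1) / (f (β + r) * C)))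
          else 0 := by
      rw [← Finset.sum_ite_eq' (Finset.Ico 1 (β + r)) (β + r - 1)
        (fun lam => (f (lam + 1) * C / (((n (lam + 1) : ℝ) + 1) * f lam)) *
          H α lam * (-(f (β + r - 1) / (f (β + r) * C))))]
      apply Finset.sum_congr rfl
      intro lam hlam
      simp only [Finset.mem_Ico] at hlam
      rw [hH β (by simp only [Finset.mem_Icc]; omega) lam,
        if_neg (by omega : ¬(β + r ≤ lam ∧ lam ≤ r + s - 1)), add_zero]
      by_cases h : lam = β + r - 1
      · rw [if_pos h, if_pos h]
      · rw [if_neg h, if_neg h]; ring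
    have hsecond : (∑ lam ∈ Finset.Ico (β + r) (r + s),
        (f (lam + 1) * C / (((n (lam + 1) : ℝ) + 1) * f lam)) * H α lam * H β lam)
        = 1 / (C * f (β + r)) - 1 / (C * f (r + s)) := by
      rw [← stmt16_tele (fun x => 1 / (C * f x)) (β + r) (r + s) hbK]
      apply Finset.sum_congr rfl
      intro lam hlam
      simp only [Finset.mem_Ico] at hlam
      rw [hH α (by simp only [Finset.mem_Icc]; omega) lam,
        if_neg (by omega : ¬ lam = α + r - 1),
        if_pos (by omega : α + r ≤ lam ∧ lam ≤ r + s - 1), zero_add,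
        hH β (by simp only [Finset.mem_Icc]; omega) lam,
        if_neg (by omega : ¬ lam = β + r - 1),
        if_pos (by omega : β + r ≤ lam ∧ lam ≤ r + s - 1), zero_add]
      exact htail lam (by omega)
    rw [hfirst, hsecond, hL₁,
      if_pos (by simp only [Finset.mem_Ico]; omega)]
    rw [hH α (by simp only [Finset.mem_Icc]; omega) (β + r - 1),
      if_neg (by omega : ¬ β + r - 1 = α + r - 1),
      if_pos (by omega : α + r ≤ β + r - 1 ∧ β + r - 1 ≤ r + s - 1), zero_add,
      show β + r - 1 + 1 = β + r from by omega]
    have hx : 0 < f (β + r - 1) := hfpos _ (by omega)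
    have hy : 0 < f (β + r) := hfpos _ (by omega)
    have hm : (0:ℝ) < (n (β + r) : ℝ) + 1 := by positivity
    field_simp
    ring
  refine ⟨hdiag, fun α hα β hβ hne => ?_⟩
  rcases lt_or_gt_of_ne hne with h | h
  · exact hcross α hα β hβ h
  · have hsym : gmet (H α) (H β) = gmet (H β) (H α) := by
      rw [hg, hg]
      exact Finset.sum_congr rfl fun x _ => by ring
    rw [hsym]
    exact hcross β hβ α hα h
end
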